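/- Fix g > 0. The map z ↦ Σ_z is differentiable on (0, ∞) with dΣ_z/dz = −Σ_z² / ((g+z)Σ_z + 2) < 0; in particular z ↦ Σ_z is strictly decreasing, and Σ_z → 0 as z → ∞. -/

import Mathlib

/-- The critical total concentration Σ_z: the unique positive solution of
Σ = 2·e^{−(g+z)Σ/2} (equivalently Σ² = 4·e^{−(g+z)Σ}). -/
noncomputable def sigmaZ (g z : ℝ) : ℝ :=
  sInf {S : ℝ | 0 < S ∧ S = 2 * Real.exp (-((g + z) * S) / 2)}

namespace SigmaZAux

open Real Filter

lemma fp_uniq {a S T : ℝ} (hS : 0 < S ∧ S = 2 * Real.exp (-(a * S) / 2))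
    (hT : 0 < T ∧ T = 2 * Real.exp (-(a * T) / 2)) (h : 0 < a) : S = T := by
  rcases le_total S T with hle | hle
  · refine le_antisymm hle ?_
    calc T = 2 * Real.exp (-(a * T) / 2) := hT.2
    _ ≤ 2 * Real.exp (-(a * S) / 2) := by gcongr
    _ = S := hS.2.symm
  · refine le_antisymm ?_ hle
    calc S = 2 * Real.exp (-(a * S) / 2) := hS.2
    _ ≤ 2 * Real.exp (-(a * T) / 2) := by gcongr
    _ = T := hT.2.symm

lemma fp_exists {a : ℝ} (h : 0 < a) :
    ∃ S, 0 < S ∧ S = 2 * Real.exp (-(a * S) / 2) := by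
  have hc : ContinuousOn (fun S : ℝ => S - 2 * Real.exp (-(a * S) / 2)) (Set.Icc 0 2) := by
    fun_prop
  have h0 : (fun S : ℝ => S - 2 * Real.exp (-(a * S) / 2)) 0 ≤ 0 := by simp
  have h2 : 0 ≤ (fun S : ℝ => S - 2 * Real.exp (-(a * S) / 2)) 2 := by
    simp only
    have : Real.exp (-(a * 2) / 2) < 1 := by
      rw [Real.exp_lt_one_iff]; linarith
    nlinarith
  obtain ⟨S, hSmem, hS⟩ := intermediate_value_Icc (by norm_num : (0:ℝ) ≤ 2) hc
    (Set.mem_Icc.2 ⟨h0, h2⟩)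
  have hS' : S - 2 * Real.exp (-(a * S) / 2) = 0 := hS
  refine ⟨S, ?_, by linarith⟩
  rcases hSmem.1.lt_or_eq with h' | h'
  · exact h'
  · exfalso
    rw [← h'] at hS'
    simp at hS'

lemma sigmaZ_spec {g z : ℝ} (h : 0 < g + z) :
    0 < sigmaZ g z ∧ sigmaZ g z = 2 * Real.exp (-((g + z) * sigmaZ g z) / 2) := by
  obtain ⟨S, hS⟩ := fp_exists h
  have hset : {T : ℝ | 0 < T ∧ T = 2 * Real.exp (-((g + z) * T) / 2)} = {S} := by
    ext T
    simp only [Set.mem_setOf_eq, Set.mem_singleton_iff]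
    constructor
    · intro hT; exact (fp_uniq hS hT h).symm
    · rintro rfl; exact hS
  rw [sigmaZ, hset, csInf_singleton]
  exact hS

noncomputable def phi (g S : ℝ) : ℝ := 2 * (Real.log 2 - Real.log S) / S - g

lemma phi_fp {g w T : ℝ} (hT : 0 < T) (h : phi g T = w) :
    T = 2 * Real.exp (-((g + w) * T) / 2) := by
  have hTne : T ≠ 0 := hT.ne'
  have hlog : Real.log T = Real.log 2 + (-((g + w) * T) / 2) := by
    rw [phi] at h
    field_simp at h ⊢
    nlinarith [h]
  calc T = Real.exp (Real.log T) := (Real.exp_log hT).symm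
  _ = 2 * Real.exp (-((g + w) * T) / 2) := by
      rw [hlog, Real.exp_add, Real.exp_log (by norm_num : (0:ℝ) < 2)]

lemma log_sigmaZ {g z : ℝ} (h : 0 < g + z) :
    Real.log (sigmaZ g z) = Real.log 2 + (-((g + z) * sigmaZ g z) / 2) := by
  obtain ⟨h1, h2⟩ := sigmaZ_spec h
  nth_rewrite 1 [h2]
  rw [Real.log_mul (by norm_num) (Real.exp_ne_zero _), Real.log_exp]

lemma phi_sigmaZ {g z : ℝ} (h : 0 < g + z) : phi g (sigmaZ g z) = z := by
  have h1 := (sigmaZ_spec h).1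
  rw [phi, log_sigmaZ h]
  field_simp
  ring

lemma phi_hasStrictDerivAt {S : ℝ} (hS : 0 < S) (g : ℝ) :
    HasStrictDerivAt (phi g) ((-2 - 2 * (Real.log 2 - Real.log S)) / S ^ 2) S := by
  have hne : S ≠ 0 := hS.ne'
  have h1 : HasStrictDerivAt (fun T => 2 * (Real.log 2 - Real.log T)) (2 * (0 - S⁻¹)) S :=
    (((hasStrictDerivAt_const S (Real.log 2)).sub (Real.hasStrictDerivAt_log hne)).const_mul 2)
  have h2 : HasStrictDerivAt (fun T : ℝ => T⁻¹) (-(S ^ 2)⁻¹) S := hasStrictDerivAt_inv hne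
  have h3 := (h1.mul h2).sub_const g
  have h4 : phi g = fun T => 2 * (Real.log 2 - Real.log T) * T⁻¹ - g := by
    funext T; rw [phi, div_eq_mul_inv]
  have hd : (-2 - 2 * (Real.log 2 - Real.log S)) / S ^ 2
      = 2 * (0 - S⁻¹) * S⁻¹ + 2 * (Real.log 2 - Real.log S) * (-(S ^ 2)⁻¹) := by
    field_simp
    ring
  rw [h4, hd]
  exact h3

end SigmaZAux

open SigmaZAux Real Filter in
/-- z ↦ Σ_z is differentiable on (0,∞) with
dΣ_z/dz = −Σ_z²/((g+z)Σ_z + 2) < 0; in particular it is strictly decreasing,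
and Σ_z → 0 as z → ∞. -/
theorem stmt_7 (g : ℝ) (hg : 0 < g) :
    (∀ z : ℝ, 0 < z →
      HasDerivAt (fun w => sigmaZ g w) (-(sigmaZ g z) ^ 2 / ((g + z) * sigmaZ g z + 2)) z ∧
      -(sigmaZ g z) ^ 2 / ((g + z) * sigmaZ g z + 2) < 0) ∧
    StrictAntiOn (fun z => sigmaZ g z) (Set.Ioi 0) ∧
    Filter.Tendsto (fun z => sigmaZ g z) Filter.atTop (nhds 0) := by
  refine ⟨?_, ?_, ?_⟩
  · intro z hz
    have hgz : 0 < g + z := by linarith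
    obtain ⟨hSpos, hSeq⟩ := sigmaZ_spec (g := g) hgz
    set S := sigmaZ g z with hSdef
    have hSne : S ≠ 0 := hSpos.ne'
    have hL : Real.log 2 - Real.log S = (g + z) * S / 2 := by
      have := log_sigmaZ (g := g) hgz
      rw [← hSdef] at this
      linarith
    set d : ℝ := (-2 - 2 * (Real.log 2 - Real.log S)) / S ^ 2 with hddef
    have hprod : 0 < (g + z) * S := mul_pos hgz hSpos
    have hdneg : d < 0 := by
      apply div_neg_of_neg_of_pos
      · rw [hL]; linarith
      · positivity
    have hdne : d ≠ 0 := hdneg.ne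
    have hd : HasStrictDerivAt (phi g) d S := phi_hasStrictDerivAt hSpos g
    have hphiS : phi g S = z := phi_sigmaZ hgz
    -- local inverse
    set inv := hd.localInverse (phi g) d S hdne with hinvdef
    have hinvder : HasStrictDerivAt inv d⁻¹ z := by
      have := hd.to_localInverse (hf' := hdne)
      rwa [hphiS] at this
    have hE := hd.hasStrictFDerivAt_equiv hdne
    have hcont : ContinuousAt inv z := by
      have := hE.localInverse_continuousAt
      rwa [hphiS] at this
    have himg : inv z = S := by
      have := hE.localInverse_apply_image
      rwa [hphiS] at this
    have hri : ∀ᶠ w in nhds z, phi g (inv w) = w := by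
      have := hE.eventually_right_inverse
      rwa [hphiS] at this
    have hpos_ev : ∀ᶠ w in nhds z, 0 < inv w := by
      have h0 : ∀ᶠ x in nhds S, 0 < x := eventually_gt_nhds hSpos
      have := hcont.tendsto
      rw [himg] at this
      exact this.eventually h0
    have heq : (fun w => sigmaZ g w) =ᶠ[nhds z] inv := by
      filter_upwards [hri, hpos_ev, eventually_gt_nhds hz] with w h1 h2 h3
      have hgw : 0 < g + w := by linarith
      have hfp := phi_fp h2 h1
      exact fp_uniq (sigmaZ_spec hgw) ⟨h2, hfp⟩ hgw
    have hder : HasDerivAt (fun w => sigmaZ g w) d⁻¹ z :=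
      hinvder.hasDerivAt.congr_of_eventuallyEq heq
    have hval : d⁻¹ = -S ^ 2 / ((g + z) * S + 2) := by
      rw [hddef, hL]
      rw [inv_div]
      rw [div_eq_div_iff (by linarith) (by linarith)]
      ring
    constructor
    · rw [← hval]; exact hder
    · rw [← hval]; simpa using hdneg
  · intro z hz w hw hzw
    simp only [Set.mem_Ioi] at hz hw
    have hgz : 0 < g + z := by linarith
    have hgw : 0 < g + w := by linarith
    obtain ⟨hSpos, hSeq⟩ := sigmaZ_spec (g := g) hgz
    obtain ⟨hTpos, hTeq⟩ := sigmaZ_spec (g := g) hgw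
    simp only
    by_contra hcon
    push_neg at hcon
    have hle : sigmaZ g z ≤ sigmaZ g w := hcon
    have hexp : Real.exp (-((g + w) * sigmaZ g w) / 2)
        < Real.exp (-((g + z) * sigmaZ g z) / 2) := by
      rw [Real.exp_lt_exp]
      nlinarith
    nlinarith [hexp]
  · rw [tendsto_order]
    constructor
    · intro a ha
      filter_upwards [eventually_gt_atTop (0:ℝ)] with z hz
      have := (sigmaZ_spec (g := g) (by linarith : (0:ℝ) < g + z)).1
      linarith
    · intro ε hε
      have h1 : Tendsto (fun z : ℝ => -(z * ε) / 2) atTop atBot := by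
        have h2 : Tendsto (fun z : ℝ => z * ε) atTop atTop :=
          Tendsto.atTop_mul_const hε tendsto_id
        have h3 : Tendsto (fun z : ℝ => -(z * ε)) atTop atBot :=
          tendsto_neg_atTop_atBot.comp h2
        exact h3.atBot_div_const (by norm_num)
      have h4 : Tendsto (fun z : ℝ => 2 * Real.exp (-(z * ε) / 2)) atTop (nhds 0) := by
        have := (Real.tendsto_exp_atBot.comp h1).const_mul (2:ℝ)
        simpa using this
      filter_upwards [h4.eventually_lt_const hε, eventually_gt_atTop (0:ℝ)] with z hlt hz
      have hgz : 0 < g + z := by linarith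
      obtain ⟨hSpos, hSeq⟩ := sigmaZ_spec (g := g) hgz
      by_contra hcon
      push_neg at hcon
      have hle : ε ≤ sigmaZ g z := hcon
      have hexp : Real.exp (-((g + z) * sigmaZ g z) / 2) ≤ Real.exp (-(z * ε) / 2) := by
        rw [Real.exp_le_exp]
        nlinarith
      nlinarith [hexp]
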